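/- arXiv:1511.04516 — 2 statements merged into one kernel-verified Lean document; each statement's English description precedes it below -/
import Mathlib

section
/- For k ∈ ℕ define Φ_{2k} = (1/√2)·[[I_k, I_k],[−i·I_k, i·I_k]]. Then: (i) Φ_{2k} is unitary; (ii) for a 2m×2n complex matrix N, the matrix Φ_{2m}·N·Φ_{2n}^{-1} has all real entries if and only if N is doubled-up, and this correspondence N ↦ Φ_{2m}NΦ_{2n}^{-1} is a bijection between 2m×2n complex doubled-up matrices and 2m×2n real matrices; (iii) Φ_{2k}·J_{2k}·Φ_{2k}^{-1} = i·𝕁_{2k}, where 𝕁_{2k} = [[0, I_k],[−I_k, 0]]; (iv) for every 2m×2n doubled-up complex matrix N, Φ_{2n}·N^♭·Φ_{2m}^{-1} = −𝕁_{2n}·(Φ_{2m}NΦ_{2n}^{-1})⊤·𝕁_{2m}, i.e., the ♭-adjoint corresponds to the ♯-adjoint of the associated real matrix. -/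
open Matrix

noncomputable section

/-- The Krein-space metric `J_{2k} = diag(I_k, -I_k)`. -/
def Jmat (k : ℕ) : Matrix (Fin k ⊕ Fin k) (Fin k ⊕ Fin k) ℂ :=
  Matrix.fromBlocks 1 0 0 (-1)

/-- The block-swap matrix `Σ_{2k} = [[0, I_k],[I_k, 0]]`. -/
def Sig (k : ℕ) : Matrix (Fin k ⊕ Fin k) (Fin k ⊕ Fin k) ℂ :=
  Matrix.fromBlocks 0 1 1 0

/-- A `2r × 2s` complex matrix is doubled-up if `Σ_{2r} X Σ_{2s} = X^#`. -/
def DoubledUp {r s : ℕ} (X : Matrix (Fin r ⊕ Fin r) (Fin s ⊕ Fin s) ℂ) : Prop :=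
  Sig r * X * Sig s = X.map (starRingEnd ℂ)

/-- The ♭-adjoint `X^♭ = J_{2s} X† J_{2r}` of a `2r × 2s` complex matrix. -/
def flatAdj {r s : ℕ} (X : Matrix (Fin r ⊕ Fin r) (Fin s ⊕ Fin s) ℂ) :
    Matrix (Fin s ⊕ Fin s) (Fin r ⊕ Fin r) ℂ :=
  Jmat s * Xᴴ * Jmat r

/-- A `2k × 2k` complex matrix is Bogoliubov if it is doubled-up and ♭-unitary. -/
def Bogoliubov {k : ℕ} (R : Matrix (Fin k ⊕ Fin k) (Fin k ⊕ Fin k) ℂ) : Prop :=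
  DoubledUp R ∧ R * flatAdj R = 1 ∧ flatAdj R * R = 1

/-- `Φ_{2k} = (1/√2)[[I, I],[−iI, iI]]`. -/
def Phi (k : ℕ) : Matrix (Fin k ⊕ Fin k) (Fin k ⊕ Fin k) ℂ :=
  ((Real.sqrt 2 : ℂ))⁻¹ • Matrix.fromBlocks 1 1
    (-(Complex.I • (1 : Matrix (Fin k) (Fin k) ℂ))) (Complex.I • (1 : Matrix (Fin k) (Fin k) ℂ))

/-- The symplectic unit `𝕁_{2k} = [[0, I],[−I, 0]]` (over `ℂ`). -/
def Jsymp (k : ℕ) : Matrix (Fin k ⊕ Fin k) (Fin k ⊕ Fin k) ℂ :=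
  Matrix.fromBlocks 0 1 (-1) 0

/-- The inverse (= conjugate transpose) of `Phi`. -/
def Psi (k : ℕ) : Matrix (Fin k ⊕ Fin k) (Fin k ⊕ Fin k) ℂ :=
  ((Real.sqrt 2 : ℂ))⁻¹ • Matrix.fromBlocks 1 (Complex.I • (1 : Matrix (Fin k) (Fin k) ℂ))
    1 (-(Complex.I • (1 : Matrix (Fin k) (Fin k) ℂ)))

lemma c_mul_c : ((Real.sqrt 2 : ℂ))⁻¹ * ((Real.sqrt 2 : ℂ))⁻¹ = (2:ℂ)⁻¹ := by
  rw [← mul_inv]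
  norm_cast
  rw [Real.mul_self_sqrt (by norm_num)]
  norm_num

lemma phi_mul_psi (k : ℕ) : Phi k * Psi k = 1 := by
  simp only [Phi, Psi, Matrix.smul_mul, Matrix.mul_smul, smul_smul, c_mul_c,
    Matrix.fromBlocks_multiply]
  simp [Matrix.smul_mul, Matrix.mul_smul, smul_smul, Complex.I_mul_I]
  ext i j
  rcases i with i|i <;> rcases j with j|j <;>
    simp [Matrix.one_apply] <;> split <;> norm_num

lemma psi_mul_phi (k : ℕ) : Psi k * Phi k = 1 := by
  simp only [Phi, Psi, Matrix.smul_mul, Matrix.mul_smul, smul_smul, c_mul_c,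
    Matrix.fromBlocks_multiply]
  simp [Matrix.smul_mul, Matrix.mul_smul, smul_smul, Complex.I_mul_I]
  ext i j
  rcases i with i|i <;> rcases j with j|j <;>
    simp [Matrix.one_apply] <;> split <;> norm_num

lemma phi_inv (k : ℕ) : (Phi k)⁻¹ = Psi k :=
  Matrix.inv_eq_right_inv (phi_mul_psi k)

lemma sig_sig (k : ℕ) : Sig k * Sig k = 1 := by
  simp [Sig, Matrix.fromBlocks_multiply, ← Matrix.fromBlocks_one]

lemma sigH (k : ℕ) : (Sig k)ᴴ = Sig k := by
  simp [Sig, Matrix.fromBlocks_conjTranspose]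

lemma sigT (k : ℕ) : (Sig k)ᵀ = Sig k := by
  simp [Sig, Matrix.fromBlocks_transpose]

lemma phiH (k : ℕ) : (Phi k)ᴴ = Psi k := by
  simp [Phi, Psi, Matrix.fromBlocks_conjTranspose, Complex.ext_iff]

lemma psiH (k : ℕ) : (Psi k)ᴴ = Phi k := by
  rw [← phiH, Matrix.conjTranspose_conjTranspose]

lemma phiT (k : ℕ) : (Phi k)ᵀ = Sig k * Psi k := by
  simp only [Phi, Psi, Sig, Matrix.transpose_smul, Matrix.fromBlocks_transpose,
    Matrix.mul_smul, Matrix.fromBlocks_multiply]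
  simp

lemma psiT (k : ℕ) : (Psi k)ᵀ = Phi k * Sig k := by
  simp only [Phi, Psi, Sig, Matrix.transpose_smul, Matrix.fromBlocks_transpose,
    Matrix.smul_mul, Matrix.fromBlocks_multiply]
  simp

lemma map_conj_eq {a b : Type*} (X : Matrix a b ℂ) : X.map (starRingEnd ℂ) = Xᵀᴴ := by
  ext i j; rfl

lemma phi_conj (k : ℕ) : (Phi k).map (starRingEnd ℂ) = Phi k * Sig k := by
  rw [map_conj_eq, phiT, Matrix.conjTranspose_mul, psiH, sigH]

lemma psi_conj (k : ℕ) : (Psi k).map (starRingEnd ℂ) = Sig k * Psi k := by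
  rw [map_conj_eq, psiT, Matrix.conjTranspose_mul, sigH, phiH]

lemma phi_J (k : ℕ) : Phi k * Jmat k = (Complex.I • Jsymp k) * Phi k := by
  simp only [Phi, Jmat, Jsymp, Matrix.smul_mul, Matrix.mul_smul, smul_smul,
    Matrix.fromBlocks_multiply, Matrix.fromBlocks_smul]
  ext i j
  rcases i with i|i <;> rcases j with j|j <;>
    simp [Matrix.one_apply] <;> split <;> ring_nf <;> simp [Complex.I_sq]

lemma J_psi (k : ℕ) : Jmat k * Psi k = Psi k * (Complex.I • Jsymp k) := by
  have h := congrArg (fun Z => Psi k * Z * Psi k) (phi_J k)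
  simp only [← mul_assoc] at h
  rw [psi_mul_phi, one_mul, mul_assoc, phi_mul_psi, mul_one] at h
  exact h

lemma phiPsi_inj {m n : ℕ} {X Y : Matrix (Fin m ⊕ Fin m) (Fin n ⊕ Fin n) ℂ}
    (h : Phi m * X * Psi n = Phi m * Y * Psi n) : X = Y := by
  have h2 := congrArg (fun Z => Psi m * Z * Phi n) h
  simp only [← Matrix.mul_assoc] at h2
  rw [psi_mul_phi, Matrix.one_mul, Matrix.one_mul, Matrix.mul_assoc, Matrix.mul_assoc,
    psi_mul_phi, Matrix.mul_one, Matrix.mul_one] at h2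
  exact h2

lemma sig_cancel {m n : ℕ} (N : Matrix (Fin m ⊕ Fin m) (Fin n ⊕ Fin n) ℂ) :
    Sig m * (Sig m * N * Sig n) * Sig n = N := by
  simp only [← Matrix.mul_assoc]
  rw [sig_sig, Matrix.one_mul, Matrix.mul_assoc, sig_sig, Matrix.mul_one]

/-- Properties of the map `N ↦ Φ_{2m} N Φ_{2n}⁻¹`:
(i) `Φ_{2k}` is unitary;
(ii) `Φ_{2m} N Φ_{2n}⁻¹` has real entries iff `N` is doubled-up, and every real
matrix is the image of a unique doubled-up matrix;
(iii) `Φ_{2k} J_{2k} Φ_{2k}⁻¹ = i 𝕁_{2k}`;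
(iv) the ♭-adjoint corresponds to the ♯-adjoint of the associated real matrix. -/
theorem phi_conjugation_properties (k m n : ℕ) :
    (Phi k ∈ Matrix.unitaryGroup (Fin k ⊕ Fin k) ℂ) ∧
    (∀ N : Matrix (Fin m ⊕ Fin m) (Fin n ⊕ Fin n) ℂ,
      (∀ a b, ((Phi m * N * (Phi n)⁻¹) a b).im = 0) ↔ DoubledUp N) ∧
    (∀ Y : Matrix (Fin m ⊕ Fin m) (Fin n ⊕ Fin n) ℝ,
      ∃! N : Matrix (Fin m ⊕ Fin m) (Fin n ⊕ Fin n) ℂ,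
        DoubledUp N ∧ Phi m * N * (Phi n)⁻¹ = Y.map (fun x => (x : ℂ))) ∧
    (Phi k * Jmat k * (Phi k)⁻¹ = Complex.I • Jsymp k) ∧
    (∀ N : Matrix (Fin m ⊕ Fin m) (Fin n ⊕ Fin n) ℂ, DoubledUp N →
      Phi n * flatAdj N * (Phi m)⁻¹
        = -(Jsymp n * (Phi m * N * (Phi n)⁻¹)ᵀ * Jsymp m)) := by
  simp only [phi_inv]
  have key : ∀ N : Matrix (Fin m ⊕ Fin m) (Fin n ⊕ Fin n) ℂ,
      (Phi m * N * Psi n).map (starRingEnd ℂ)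
        = Phi m * (Sig m * N.map (starRingEnd ℂ) * Sig n) * Psi n := by
    intro N
    rw [Matrix.map_mul, Matrix.map_mul, phi_conj, psi_conj]
    simp only [Matrix.mul_assoc]
  refine ⟨?_, ?_, ?_, ?_, ?_⟩
  · rw [Matrix.mem_unitaryGroup_iff, Matrix.star_eq_conjTranspose, phiH]
    exact phi_mul_psi k
  · intro N
    constructor
    · intro h
      have hM : (Phi m * N * Psi n).map (starRingEnd ℂ) = Phi m * N * Psi n := by
        ext a b
        exact Complex.conj_eq_iff_im.mpr (h a b)
      have h3 : Sig m * N.map (starRingEnd ℂ) * Sig n = N :=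
        phiPsi_inj ((key N).symm.trans hM)
      have h4 := congrArg (fun Z => Sig m * Z * Sig n) h3
      simp only [sig_cancel] at h4
      exact h4.symm
    · intro hD a b
      have hM : (Phi m * N * Psi n).map (starRingEnd ℂ) = Phi m * N * Psi n := by
        have hD' : Sig m * N * Sig n = N.map (starRingEnd ℂ) := hD
        rw [key, ← hD', sig_cancel]
      exact Complex.conj_eq_iff_im.mp (congrFun (congrFun hM a) b)
  · intro Y
    have hYr : (Y.map (fun x => (x : ℂ))).map (starRingEnd ℂ) = Y.map (fun x => (x : ℂ)) := by
      ext a b; simp [Matrix.map_apply]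
    refine ⟨Psi m * Y.map (fun x => (x : ℂ)) * Phi n, ⟨?_, ?_⟩, ?_⟩
    · unfold DoubledUp
      rw [Matrix.map_mul, Matrix.map_mul, psi_conj, phi_conj, hYr]
      simp only [Matrix.mul_assoc]
    · simp only [← Matrix.mul_assoc]
      rw [phi_mul_psi, Matrix.one_mul, Matrix.mul_assoc, phi_mul_psi, Matrix.mul_one]
    · rintro N' ⟨-, hN'⟩
      apply phiPsi_inj (m := m) (n := n)
      rw [hN']
      simp only [← Matrix.mul_assoc]
      rw [phi_mul_psi, Matrix.one_mul, Matrix.mul_assoc, phi_mul_psi, Matrix.mul_one]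
  · rw [phi_J, mul_assoc, phi_mul_psi, mul_one]
  · intro N hD
    have hNH : Nᴴ = Sig n * Nᵀ * Sig m := by
      have e1 : Nᴴ = (N.map (starRingEnd ℂ))ᵀ := by ext i j; rfl
      rw [e1, ← hD, Matrix.transpose_mul, Matrix.transpose_mul, sigT, sigT,
        ← Matrix.mul_assoc]
    unfold flatAdj
    calc Phi n * (Jmat n * Nᴴ * Jmat m) * Psi m
        = (Phi n * Jmat n) * Nᴴ * (Jmat m * Psi m) := by simp only [Matrix.mul_assoc]
      _ = ((Complex.I • Jsymp n) * Phi n) * Nᴴ * (Psi m * (Complex.I • Jsymp m)) := by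
          rw [phi_J, J_psi]
      _ = (Complex.I • Jsymp n) * ((Phi n * Sig n) * Nᵀ * (Sig m * Psi m))
            * (Complex.I • Jsymp m) := by
          rw [hNH]; simp only [Matrix.mul_assoc]
      _ = (Complex.I • Jsymp n) * (Phi m * N * Psi n)ᵀ * (Complex.I • Jsymp m) := by
          rw [Matrix.transpose_mul, Matrix.transpose_mul, psiT, phiT]
          simp only [Matrix.mul_assoc]
      _ = -(Jsymp n * (Phi m * N * Psi n)ᵀ * Jsymp m) := by
          simp only [Matrix.smul_mul, Matrix.mul_smul, smul_smul, Complex.I_mul_I,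
            neg_smul, one_smul]
end
end

section
/- Let M be a 2n×2n complex Hermitian doubled-up matrix, N a 2m×2n complex doubled-up matrix, and S a 2m×2m Bogoliubov matrix. Suppose N = V·N̂·W^♭, where V (2m×2m) and W (2n×2n) are Bogoliubov matrices and N̂ is a 2m×2n doubled-up matrix. Then for every s ∈ ℂ such that s·I + i·J_{2n}M + (1/2)·N^♭N is invertible, the matrix s·I + i·J_{2n}(W†MW) + (1/2)·N̂^♭N̂ is also invertible, and [I − N·(s·I + i·J_{2n}M + (1/2)·N^♭N)^{-1}·N^♭]·S = V·[I − N̂·(s·I + i·J_{2n}(W†MW) + (1/2)·N̂^♭N̂)^{-1}·N̂^♭]·(V^♭S). -/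
open Matrix

noncomputable section

lemma Jmat_mul_Jmat (k : ℕ) : Jmat k * Jmat k = 1 := by
  simp [Jmat, Matrix.fromBlocks_multiply, ← Matrix.fromBlocks_one]

lemma Jmat_conjTranspose (k : ℕ) : (Jmat k)ᴴ = Jmat k := by
  simp [Jmat, Matrix.fromBlocks_conjTranspose]

lemma flatAdj_mul {r s t : ℕ} (X : Matrix (Fin r ⊕ Fin r) (Fin s ⊕ Fin s) ℂ)
    (Y : Matrix (Fin s ⊕ Fin s) (Fin t ⊕ Fin t) ℂ) :
    flatAdj (X * Y) = flatAdj Y * flatAdj X := by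
  unfold flatAdj
  rw [conjTranspose_mul]
  calc Jmat t * (Yᴴ * Xᴴ) * Jmat r
      = Jmat t * Yᴴ * ((Jmat s * Jmat s) * (Xᴴ * Jmat r)) := by
        rw [Jmat_mul_Jmat, Matrix.one_mul]; simp only [Matrix.mul_assoc]
    _ = Jmat t * Yᴴ * Jmat s * (Jmat s * Xᴴ * Jmat r) := by
        simp only [Matrix.mul_assoc]

lemma flatAdj_flatAdj {r s : ℕ} (X : Matrix (Fin r ⊕ Fin r) (Fin s ⊕ Fin s) ℂ) :
    flatAdj (flatAdj X) = X := by
  unfold flatAdj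
  simp only [conjTranspose_mul, Jmat_conjTranspose, conjTranspose_conjTranspose]
  calc Jmat r * (Jmat r * (X * Jmat s)) * Jmat s
      = (Jmat r * Jmat r) * (X * (Jmat s * Jmat s)) := by
        simp only [Matrix.mul_assoc]
    _ = X := by rw [Jmat_mul_Jmat, Jmat_mul_Jmat]; simp


set_option maxHeartbeats 1000000 in
/-- Factorization of the transfer function of a general linear quantum
stochastic system: if `N = V N̂ W^♭` with `V`, `W` Bogoliubov and `N̂ = Nh`
doubled-up, then for every `s` for which `sI + iJM + (1/2)N^♭N` is invertible,
`sI + iJ(W†MW) + (1/2)N̂^♭N̂` is invertible and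
`[I − N(sI + iJM + N^♭N/2)⁻¹N^♭]S
  = V[I − N̂(sI + iJ(W†MW) + N̂^♭N̂/2)⁻¹N̂^♭](V^♭S)`. -/
theorem general_transfer_function_factorization (m n : ℕ)
    (M : Matrix (Fin n ⊕ Fin n) (Fin n ⊕ Fin n) ℂ)
    (hM : M.IsHermitian) (hMdu : DoubledUp M)
    (N : Matrix (Fin m ⊕ Fin m) (Fin n ⊕ Fin n) ℂ) (hNdu : DoubledUp N)
    (S : Matrix (Fin m ⊕ Fin m) (Fin m ⊕ Fin m) ℂ) (hS : Bogoliubov S)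
    (V : Matrix (Fin m ⊕ Fin m) (Fin m ⊕ Fin m) ℂ) (hV : Bogoliubov V)
    (W : Matrix (Fin n ⊕ Fin n) (Fin n ⊕ Fin n) ℂ) (hW : Bogoliubov W)
    (Nh : Matrix (Fin m ⊕ Fin m) (Fin n ⊕ Fin n) ℂ) (hNh : DoubledUp Nh)
    (hfact : N = V * Nh * flatAdj W) :
    ∀ s : ℂ,
      IsUnit (s • (1 : Matrix (Fin n ⊕ Fin n) (Fin n ⊕ Fin n) ℂ)
          + Complex.I • (Jmat n * M) + (1 / 2 : ℂ) • (flatAdj N * N)) →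
      IsUnit (s • (1 : Matrix (Fin n ⊕ Fin n) (Fin n ⊕ Fin n) ℂ)
          + Complex.I • (Jmat n * (Wᴴ * M * W)) + (1 / 2 : ℂ) • (flatAdj Nh * Nh)) ∧
      (1 - N * (s • (1 : Matrix (Fin n ⊕ Fin n) (Fin n ⊕ Fin n) ℂ)
            + Complex.I • (Jmat n * M) + (1 / 2 : ℂ) • (flatAdj N * N))⁻¹
          * flatAdj N) * S
        = V * (1 - Nh * (s • (1 : Matrix (Fin n ⊕ Fin n) (Fin n ⊕ Fin n) ℂ)
            + Complex.I • (Jmat n * (Wᴴ * M * W))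
            + (1 / 2 : ℂ) • (flatAdj Nh * Nh))⁻¹ * flatAdj Nh) * (flatAdj V * S) := by
  intro s hA
  set A := s • (1 : Matrix (Fin n ⊕ Fin n) (Fin n ⊕ Fin n) ℂ)
      + Complex.I • (Jmat n * M) + (1 / 2 : ℂ) • (flatAdj N * N) with hAdef
  set Ah := s • (1 : Matrix (Fin n ⊕ Fin n) (Fin n ⊕ Fin n) ℂ)
      + Complex.I • (Jmat n * (Wᴴ * M * W)) + (1 / 2 : ℂ) • (flatAdj Nh * Nh) with hAhdef
  have hWW : W * flatAdj W = 1 := hW.2.1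
  have hWW' : flatAdj W * W = 1 := hW.2.2
  have hVV : V * flatAdj V = 1 := hV.2.1
  have hVV' : flatAdj V * V = 1 := hV.2.2
  -- W J W† = J
  have hWJ : W * Jmat n * Wᴴ = Jmat n := by
    have h1 : W * Jmat n * Wᴴ * Jmat n = 1 := by
      have := hWW
      unfold flatAdj at this
      calc W * Jmat n * Wᴴ * Jmat n = W * (Jmat n * Wᴴ * Jmat n) := by
            simp only [Matrix.mul_assoc]
        _ = 1 := this
    calc W * Jmat n * Wᴴ = (W * Jmat n * Wᴴ * Jmat n) * Jmat n := by
          simp only [Matrix.mul_assoc, Jmat_mul_Jmat, Matrix.mul_one]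
      _ = Jmat n := by rw [h1, Matrix.one_mul]
  -- N^♭ = W * Nh^♭ * V^♭
  have hNflat : flatAdj N = W * flatAdj Nh * flatAdj V := by
    rw [hfact, flatAdj_mul, flatAdj_mul, flatAdj_flatAdj, Matrix.mul_assoc]
  -- N^♭ N = W (Nh^♭ Nh) W^♭
  have hNN : flatAdj N * N = W * (flatAdj Nh * Nh) * flatAdj W := by
    rw [hNflat, hfact]
    calc W * flatAdj Nh * flatAdj V * (V * Nh * flatAdj W)
        = W * flatAdj Nh * ((flatAdj V * V) * (Nh * flatAdj W)) := by
          simp only [Matrix.mul_assoc]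
      _ = W * (flatAdj Nh * Nh) * flatAdj W := by
          rw [hVV', Matrix.one_mul]; simp only [Matrix.mul_assoc]
  -- key: A = W * Ah * W^♭
  have key : A = W * Ah * flatAdj W := by
    rw [hAdef, hAhdef]
    rw [Matrix.mul_add, Matrix.mul_add, Matrix.add_mul, Matrix.add_mul]
    congr 1
    · congr 1
      · rw [Matrix.mul_smul, Matrix.smul_mul, Matrix.mul_one, hWW]
      · rw [Matrix.mul_smul, Matrix.smul_mul]
        congr 1
        symm
        unfold flatAdj
        calc W * (Jmat n * (Wᴴ * M * W)) * (Jmat n * Wᴴ * Jmat n)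
            = (W * Jmat n * Wᴴ) * M * (W * Jmat n * Wᴴ) * Jmat n := by
              simp only [Matrix.mul_assoc]
          _ = Jmat n * M := by
              rw [hWJ]; simp only [Matrix.mul_assoc, Jmat_mul_Jmat, Matrix.mul_one]
    · rw [Matrix.mul_smul, Matrix.smul_mul, hNN]
  -- units
  have hWu : IsUnit W := by
    have := invertibleOfRightInverse _ _ hWW
    exact isUnit_of_invertible W
  have hWfu : IsUnit (flatAdj W) := by
    have := invertibleOfRightInverse _ _ hWW'
    exact isUnit_of_invertible (flatAdj W)
  have hAhu : IsUnit Ah := by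
    have : Ah = flatAdj W * A * W := by
      rw [key]
      symm
      calc flatAdj W * (W * Ah * flatAdj W) * W
          = (flatAdj W * W) * Ah * (flatAdj W * W) := by simp only [Matrix.mul_assoc]
        _ = Ah := by rw [hWW']; simp
    rw [this]
    exact (hWfu.mul hA).mul hWu
  refine ⟨hAhu, ?_⟩
  -- inverses
  have hWinv : W⁻¹ = flatAdj W := Matrix.inv_eq_right_inv hWW
  have hWfinv : (flatAdj W)⁻¹ = W := Matrix.inv_eq_right_inv hWW'
  have hAinv : A⁻¹ = W * Ah⁻¹ * flatAdj W := by
    rw [key, Matrix.mul_inv_rev, Matrix.mul_inv_rev, hWinv, hWfinv]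
    simp only [Matrix.mul_assoc]
  -- core identity
  have core : N * A⁻¹ * flatAdj N = V * (Nh * Ah⁻¹ * flatAdj Nh) * flatAdj V := by
    rw [hAinv, hNflat, hfact]
    calc V * Nh * flatAdj W * (W * Ah⁻¹ * flatAdj W) * (W * flatAdj Nh * flatAdj V)
        = V * Nh * ((flatAdj W * W) * (Ah⁻¹ * ((flatAdj W * W) * (flatAdj Nh * flatAdj V)))) := by
          simp only [Matrix.mul_assoc]
      _ = V * (Nh * Ah⁻¹ * flatAdj Nh) * flatAdj V := by
          rw [hWW', Matrix.one_mul, Matrix.one_mul]; simp only [Matrix.mul_assoc]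
  rw [Matrix.sub_mul, Matrix.mul_sub, Matrix.sub_mul, Matrix.one_mul, Matrix.mul_one, core]
  congr 1
  · calc S = (V * flatAdj V) * S := by rw [hVV, Matrix.one_mul]
      _ = V * (flatAdj V * S) := by rw [Matrix.mul_assoc]
  · simp only [Matrix.mul_assoc]
end
end
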